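/- The equivalence relation E_{𝒵₀} on the power set of ℕ, defined by A E_{𝒵₀} B if and only if the symmetric difference A △ B has asymptotic density zero, is Borel bireducible with the equivalence relation E_{c₀} on ℝ^ℕ, defined by x E_{c₀} y if and only if the sequence (x_n − y_n) converges to 0; that is, each of these two equivalence relations is Borel reducible to the other. -/

import Mathlib

open Filter Topology

/-- The equivalence relation `E_{𝒵₀}` on the Cantor space `2^ℕ` (identified with the power
set of `ℕ`): two sets are equivalent iff their symmetric difference has asymptotic density
zero. -/
def densityZeroEquiv (x y : ℕ → Bool) : Prop :=
  Tendsto (fun n => (((Finset.range n).filter fun k => x k ≠ y k).card : ℝ) / n)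
    atTop (𝓝 0)

/-- The equivalence relation `E_{c₀}` on `ℝ^ℕ`: two sequences are equivalent iff their
difference converges to `0`. -/
def c0Equiv (x y : ℕ → ℝ) : Prop :=
  Tendsto (fun n => x n - y n) atTop (𝓝 0)

/-- `E` (on a space `X`) is Borel reducible to `F` (on a space `Y`): there is a Borel
measurable `f : X → Y` with `x₁ E x₂ ↔ f x₁ F f x₂`. -/
def BorelReducible {X Y : Type*} [MeasurableSpace X] [MeasurableSpace Y]
    (E : X → X → Prop) (F : Y → Y → Prop) : Prop :=
  ∃ f : X → Y, Measurable f ∧ ∀ x₁ x₂ : X, E x₁ x₂ ↔ F (f x₁) (f x₂)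

/-! ### Auxiliary development -/

section Blocks
variable (p : ℕ → Prop) [DecidablePred p]

/-- Counting function of a predicate below `n`. -/
noncomputable def cnt (n : ℕ) : ℕ := ((Finset.range n).filter p).card

/-- Count of a predicate on the dyadic block `[2^i, 2^(i+1))`. -/
noncomputable def blk (i : ℕ) : ℕ := ((Finset.Ico (2^i) (2^(i+1))).filter p).card

lemma cnt_mono : Monotone (cnt p) := fun _ _ h =>
  Finset.card_le_card (Finset.filter_subset_filter _ (Finset.range_subset_range.2 h))

lemma cnt_add_blk (i : ℕ) : cnt p (2^(i+1)) = cnt p (2^i) + blk p i := by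
  unfold cnt blk
  rw [Finset.range_eq_Ico,
    ← Finset.Ico_union_Ico_eq_Ico (Nat.zero_le (2^i)) (by norm_num [pow_succ] : (2:ℕ)^i ≤ 2^(i+1)),
    Finset.filter_union,
    Finset.card_union_of_disjoint
      (Finset.disjoint_filter_filter (Finset.Ico_disjoint_Ico_consecutive _ _ _)),
    ← Finset.range_eq_Ico]

lemma cnt_eq_sum (J m : ℕ) (h : J ≤ m) :
    cnt p (2^m) = cnt p (2^J) + ∑ i ∈ Finset.Ico J m, blk p i := by
  induction m, h using Nat.le_induction with
  | base => simp
  | succ m hm ih =>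
      rw [cnt_add_blk, ih, Finset.sum_Ico_succ_top hm]; ring

/-- Density zero is equivalent to vanishing relative counts on dyadic blocks. -/
lemma densityZero_iff_blocks :
    Tendsto (fun n => ((cnt p n : ℝ)) / n) atTop (𝓝 0) ↔
      Tendsto (fun i => ((blk p i : ℝ)) / 2^i) atTop (𝓝 0) := by
  constructor
  · intro h
    have hpow : Tendsto (fun i : ℕ => 2^(i+1)) atTop atTop :=
      tendsto_atTop_mono
        (fun i => le_trans (i.lt_two_pow_self).le (Nat.pow_le_pow_right (by norm_num) i.le_succ))
        tendsto_id
    have h2 : Tendsto (fun i : ℕ => ((cnt p (2^(i+1)) : ℝ)) / ((2^(i+1) : ℕ) : ℝ)) atTop (𝓝 0) :=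
      h.comp hpow
    have key : ∀ i : ℕ, ((blk p i : ℝ)) / 2^i ≤
        2 * (((cnt p (2^(i+1)) : ℝ)) / ((2^(i+1):ℕ):ℝ)) := by
      intro i
      have hb : (blk p i : ℝ) ≤ (cnt p (2^(i+1)) : ℝ) := by
        have : blk p i ≤ cnt p (2^(i+1)) := by rw [cnt_add_blk]; omega
        exact_mod_cast this
      have heq : 2 * (((cnt p (2^(i+1)) : ℝ)) / ((2^(i+1):ℕ):ℝ)) = (cnt p (2^(i+1)) : ℝ) / 2^i := by
        push_cast
        rw [pow_succ]
        field_simp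
        ring
      rw [heq]
      gcongr
    have h0 : ∀ i : ℕ, (0:ℝ) ≤ ((blk p i : ℝ)) / 2^i := fun i => by positivity
    exact squeeze_zero h0 key (by simpa using h2.const_mul 2)
  · intro h
    rw [Metric.tendsto_atTop] at h ⊢
    intro ε hε
    obtain ⟨J, hJ⟩ := h (ε/4) (by linarith)
    set C : ℝ := (cnt p (2^J) : ℝ) + 1 with hC
    have hCpos : 0 < C := by positivity
    obtain ⟨M, hM⟩ := pow_unbounded_of_one_lt (R := ℝ) (2 * C / ε) (by norm_num : (1:ℝ) < 2)
    refine ⟨2^(max J M), fun n hn => ?_⟩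
    have hn1 : 1 ≤ n := le_trans Nat.one_le_two_pow hn
    set k := Nat.log 2 n with hk
    have hkn : 2^k ≤ n := Nat.pow_log_le_self 2 (by omega)
    have hnk : n < 2^(k+1) := Nat.lt_pow_succ_log_self (by norm_num) n
    have hJk : J ≤ k := by
      by_contra hc; push_neg at hc
      have h1 : 2^(k+1) ≤ 2^(max J M) := Nat.pow_le_pow_right (by norm_num) (by omega)
      omega
    have hMk : M ≤ k := by
      by_contra hc; push_neg at hc
      have h1 : 2^(k+1) ≤ 2^(max J M) := Nat.pow_le_pow_right (by norm_num) (by omega)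
      omega
    have hcnt : (cnt p n : ℝ) ≤ C + (ε/4) * 2^(k+1) := by
      have h1 : cnt p n ≤ cnt p (2^(k+1)) := cnt_mono p hnk.le
      rw [cnt_eq_sum p J (k+1) (by omega)] at h1
      have h2 : ∀ i ∈ Finset.Ico J (k+1), (blk p i : ℝ) ≤ (ε/4) * 2^i := by
        intro i hi
        simp only [Finset.mem_Ico] at hi
        have hd := hJ i hi.1
        rw [Real.dist_eq, sub_zero, abs_of_nonneg (by positivity)] at hd
        have hpow : (0:ℝ) < 2^i := by positivity
        rw [div_lt_iff₀ hpow] at hd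
        linarith
      have h3 : (∑ i ∈ Finset.Ico J (k+1), (blk p i : ℝ)) ≤
          (ε/4) * ∑ i ∈ Finset.Ico J (k+1), (2:ℝ)^i := by
        rw [Finset.mul_sum]; exact Finset.sum_le_sum h2
      have h4 : (∑ i ∈ Finset.Ico J (k+1), (2:ℝ)^i) ≤ 2^(k+1) := by
        calc (∑ i ∈ Finset.Ico J (k+1), (2:ℝ)^i) ≤ ∑ i ∈ Finset.range (k+1), (2:ℝ)^i := by
              apply Finset.sum_le_sum_of_subset_of_nonneg
              · rw [Finset.range_eq_Ico]; exact Finset.Ico_subset_Ico (by omega) le_rfl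
              · intros; positivity
          _ = (2^(k+1) - 1)/(2-1) := geom_sum_eq (by norm_num) (k+1)
          _ ≤ 2^(k+1) := by norm_num
      have h5 : (∑ i ∈ Finset.Ico J (k+1), (blk p i : ℝ)) ≤ (ε/4) * 2^(k+1) :=
        le_trans h3 (by nlinarith)
      have hcast : (cnt p n : ℝ) ≤ (cnt p (2^J) : ℝ) + ∑ i ∈ Finset.Ico J (k+1), (blk p i : ℝ) := by
        exact_mod_cast h1
      calc (cnt p n : ℝ) ≤ (cnt p (2^J):ℝ) + ∑ i ∈ Finset.Ico J (k+1), (blk p i : ℝ) := hcast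
        _ ≤ (cnt p (2^J):ℝ) + (ε/4) * 2^(k+1) := by linarith
        _ ≤ C + (ε/4)*2^(k+1) := by simp [hC]
    have hnR : (2:ℝ)^k ≤ (n:ℝ) := by exact_mod_cast hkn
    have hnpos : (0:ℝ) < n := by exact_mod_cast hn1
    have hkpos : (0:ℝ) < 2^k := by positivity
    rw [Real.dist_eq, sub_zero, abs_of_nonneg (by positivity)]
    have hCk : C / (2:ℝ)^k < ε/2 := by
      have h2k : (2:ℝ)^M ≤ 2^k := pow_le_pow_right₀ (by norm_num) hMk
      rw [div_lt_iff₀ hkpos]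
      rw [div_lt_iff₀ hε] at hM
      nlinarith
    calc (cnt p n : ℝ) / n ≤ (C + (ε/4)*2^(k+1)) / 2^k := by
          apply div_le_div₀ (by positivity) hcnt hkpos hnR
      _ = C / 2^k + ε/2 := by rw [pow_succ]; field_simp; ring
      _ < ε/2 + ε/2 := by linarith
      _ = ε := by ring
end Blocks

/-- The dyadic block `[2^k, 2^(k+1))` as a finset. -/
def Iblk (k : ℕ) : Finset ℕ := Finset.Ico (2^k) (2^(k+1))

lemma dze_iff_blocks (A B : ℕ → Bool) :
    densityZeroEquiv A B ↔
      Tendsto (fun k => (((Iblk k).filter (fun j => A j ≠ B j)).card : ℝ)/2^k) atTop (𝓝 0) :=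
  densityZero_iff_blocks (fun j => A j ≠ B j)

/-! ### The reduction from `densityZeroEquiv` to `c0Equiv` -/

noncomputable def e1 : ℕ × Finset ℕ ≃ ℕ := Denumerable.eqv (ℕ × Finset ℕ)

/-- The reduction map from `2^ℕ` to `ℝ^ℕ`: the coordinate encoded by a pair `(k, s)` with
`s ⊆ [2^k, 2^(k+1))` records the relative size of the symmetric difference of `A` and `s`
on the `k`-th dyadic block. -/
noncomputable def fmap (A : ℕ → Bool) (n : ℕ) : ℝ :=
  if (e1.symm n).2 ⊆ Iblk (e1.symm n).1 then
    (((Iblk (e1.symm n).1).filter (fun j => A j ≠ decide (j ∈ (e1.symm n).2))).card : ℝ)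
      / 2^(e1.symm n).1
  else 0

lemma fmap_measurable : Measurable fmap := by
  rw [measurable_pi_iff]
  intro n
  by_cases h : (e1.symm n).2 ⊆ Iblk (e1.symm n).1
  · simp only [fmap, if_pos h]
    apply Measurable.div_const
    have heq : (fun A : ℕ → Bool =>
        (((Iblk (e1.symm n).1).filter (fun j => A j ≠ decide (j ∈ (e1.symm n).2))).card : ℝ)) =
        fun A => ∑ j ∈ Iblk (e1.symm n).1,
          if A j ≠ decide (j ∈ (e1.symm n).2) then (1:ℝ) else 0 := by
      funext A
      rw [Finset.card_filter]
      push_cast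
      rfl
    rw [heq]
    apply Finset.measurable_sum
    intro j _
    exact (measurable_of_countable
      (fun b : Bool => if b ≠ decide (j ∈ (e1.symm n).2) then (1:ℝ) else 0)).comp
      (measurable_pi_apply j)
  · simp only [fmap, if_neg h]
    exact measurable_const

lemma card_filter_ne_le (A B : ℕ → Bool) (c : ℕ → Bool) (t : Finset ℕ) :
    (t.filter (fun j => A j ≠ c j)).card ≤
      (t.filter (fun j => B j ≠ c j)).card + (t.filter (fun j => A j ≠ B j)).card := by
  calc (t.filter (fun j => A j ≠ c j)).card
      ≤ ((t.filter (fun j => B j ≠ c j)) ∪ (t.filter (fun j => A j ≠ B j))).card := by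
        apply Finset.card_le_card
        intro j hj
        simp only [Finset.mem_filter, Finset.mem_union] at *
        rcases hj with ⟨hjt, hne⟩
        by_cases hAB : A j = B j
        · exact Or.inl ⟨hjt, by rw [← hAB]; exact hne⟩
        · exact Or.inr ⟨hjt, hAB⟩
    _ ≤ _ := Finset.card_union_le _ _

lemma fmap_bound (A B : ℕ → Bool) (n : ℕ)
    (hv : (e1.symm n).2 ⊆ Iblk (e1.symm n).1) :
    ‖fmap A n - fmap B n‖ ≤
      (((Iblk (e1.symm n).1).filter (fun j => A j ≠ B j)).card : ℝ)/2^(e1.symm n).1 := by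
  set k := (e1.symm n).1
  set s := (e1.symm n).2
  set c : ℕ → Bool := fun j => decide (j ∈ s)
  simp only [fmap, if_pos (show (e1.symm n).2 ⊆ Iblk (e1.symm n).1 from hv)]
  rw [div_sub_div_same, Real.norm_eq_abs, abs_div, abs_of_pos (by positivity : (0:ℝ) < 2^k)]
  gcongr
  rw [abs_sub_le_iff]
  constructor
  · have h1 := card_filter_ne_le A B c (Iblk k)
    have h2 : (((Iblk k).filter (fun j => A j ≠ c j)).card : ℝ) ≤
        ((Iblk k).filter (fun j => B j ≠ c j)).card + ((Iblk k).filter (fun j => A j ≠ B j)).card := by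
      exact_mod_cast h1
    linarith
  · have h1 := card_filter_ne_le B A c (Iblk k)
    have hsw : (Iblk k).filter (fun j => B j ≠ A j) = (Iblk k).filter (fun j => A j ≠ B j) :=
      Finset.filter_congr (fun j _ => by constructor <;> exact Ne.symm)
    rw [hsw] at h1
    have h2 : (((Iblk k).filter (fun j => B j ≠ c j)).card : ℝ) ≤
        ((Iblk k).filter (fun j => A j ≠ c j)).card + ((Iblk k).filter (fun j => A j ≠ B j)).card := by
      exact_mod_cast h1
    linarith

lemma reduction1 (A B : ℕ → Bool) :
    densityZeroEquiv A B ↔ c0Equiv (fmap A) (fmap B) := by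
  rw [dze_iff_blocks]
  constructor
  · intro hb
    rw [c0Equiv, NormedAddCommGroup.tendsto_nhds_zero]
    intro ε hε
    rw [Metric.tendsto_atTop] at hb
    obtain ⟨K, hK⟩ := hb ε hε
    have hS : {q : ℕ × Finset ℕ | q.1 < K ∧ q.2 ⊆ Iblk q.1}.Finite := by
      apply Set.Finite.subset (Finset.finite_toSet
        ((Finset.range K).biUnion (fun k => {k} ×ˢ (Iblk k).powerset)))
      rintro ⟨k, s⟩ ⟨hk, hs⟩
      simp only [Finset.coe_biUnion, Finset.coe_range, Set.mem_iUnion, Finset.mem_coe,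
        Finset.mem_product, Finset.mem_singleton, Finset.mem_powerset, Set.mem_Iio]
      exact ⟨k, hk, rfl, hs⟩
    have hfin : {n : ℕ | ¬ ‖fmap A n - fmap B n‖ < ε}.Finite := by
      apply Set.Finite.subset (hS.image e1)
      intro n hn
      simp only [Set.mem_setOf_eq] at hn
      by_cases hv : (e1.symm n).2 ⊆ Iblk (e1.symm n).1
      · have hlt : (e1.symm n).1 < K := by
          by_contra hc
          push_neg at hc
          have hd := hK (e1.symm n).1 hc
          rw [Real.dist_eq, sub_zero, abs_of_nonneg (by positivity)] at hd
          exact hn (lt_of_le_of_lt (fmap_bound A B n hv) hd)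
        exact ⟨e1.symm n, ⟨hlt, hv⟩, Equiv.apply_symm_apply _ _⟩
      · exfalso
        apply hn
        simp only [fmap, if_neg hv]
        simpa using hε
    rw [← Nat.cofinite_eq_atTop]
    exact hfin.eventually_cofinite_notMem.mono (fun n hn => by simpa using hn)
  · intro hc
    set sB : ℕ → Finset ℕ := fun k => (Iblk k).filter (fun j => B j = true) with hsB
    set nk : ℕ → ℕ := fun k => e1 (k, sB k) with hnkdef
    have inj : Function.Injective nk := by
      intro a b hab
      have := e1.injective hab
      exact congrArg Prod.fst this
    have hnk : Tendsto nk atTop atTop := by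
      rw [← Nat.cofinite_eq_atTop]
      exact inj.tendsto_cofinite
    have key : ∀ k, fmap A (nk k) - fmap B (nk k)
        = (((Iblk k).filter (fun j => A j ≠ B j)).card : ℝ)/2^k := by
      intro k
      have hsymm : e1.symm (nk k) = (k, sB k) := Equiv.symm_apply_apply _ _
      have hdec : ∀ j ∈ Iblk k, decide (j ∈ sB k) = B j := by
        intro j hj
        by_cases hb : B j = true
        · simp [hsB, Finset.mem_filter, hj, hb]
        · simp only [Bool.not_eq_true] at hb
          simp [hsB, Finset.mem_filter, hj, hb]
      have h1 : (Iblk k).filter (fun j => A j ≠ decide (j ∈ sB k)) =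
          (Iblk k).filter (fun j => A j ≠ B j) :=
        Finset.filter_congr (fun j hj => by rw [hdec j hj])
      have h2 : (Iblk k).filter (fun j => B j ≠ decide (j ∈ sB k)) = ∅ := by
        rw [Finset.filter_eq_empty_iff]
        intro j hj
        rw [hdec j hj]
        simp
      simp only [fmap, hsymm]
      rw [if_pos (Finset.filter_subset _ _), if_pos (Finset.filter_subset _ _), h1, h2]
      simp
    have hcomp := hc.comp hnk
    simpa only [Function.comp_def, key] using hcomp

/-! ### The reduction from `c0Equiv` to `densityZeroEquiv` -/

noncomputable def e2 : ℕ × ℤ ≃ ℕ := Denumerable.eqv (ℕ × ℤ)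

/-- The truncation `t ↦ min 1 (max 0 (t - k))`. -/
noncomputable def Fc (k : ℤ) (t : ℝ) : ℝ := min 1 (max 0 (t - k))

lemma Fc_nonneg (k : ℤ) (t : ℝ) : 0 ≤ Fc k t :=
  le_min (by norm_num) (le_max_left _ _)

lemma Fc_le_one (k : ℤ) (t : ℝ) : Fc k t ≤ 1 := min_le_left _ _

lemma Fc_mono (k : ℤ) : Monotone (Fc k) := by
  intro s t h; unfold Fc; gcongr

lemma Fc_lipschitz (k : ℤ) (a b : ℝ) : |Fc k a - Fc k b| ≤ |a - b| := by
  unfold Fc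
  calc |min 1 (max 0 (a-k)) - min 1 (max 0 (b-k))|
      ≤ max |1 - 1| |max 0 (a-k) - max 0 (b-k)| := abs_min_sub_min_le_max _ _ _ _
    _ = |max (a-k) 0 - max (b-k) 0| := by rw [max_comm 0, max_comm 0]; simp
    _ ≤ |(a-k) - (b-k)| := abs_max_sub_max_le_abs _ _ _
    _ = |a - b| := by ring_nf

lemma Fc_continuous (k : ℤ) : Continuous (Fc k) :=
  continuous_const.min (continuous_const.max (continuous_id.sub continuous_const))

lemma Fc_eq_zero (k : ℤ) (a : ℝ) (h : a ≤ k) : Fc k a = 0 := by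
  rw [Fc, max_eq_left (by linarith), min_eq_right (by norm_num)]

lemma Fc_eq_one (k : ℤ) (a : ℝ) (h : (k:ℝ) + 1 ≤ a) : Fc k a = 1 :=
  min_eq_left (le_trans (by linarith) (le_max_right 0 (a - k)))

lemma Fc_ne_finite (a b : ℝ) : {k : ℤ | Fc k a ≠ Fc k b}.Finite := by
  apply Set.Finite.subset (Set.finite_Icc (⌊min a b⌋ - 1) ⌈max a b⌉)
  intro k hk
  simp only [Set.mem_setOf_eq] at hk
  rw [Set.mem_Icc]
  constructor
  · by_contra hc
    push_neg at hc
    have h1 : (k:ℝ) + 1 ≤ ⌊min a b⌋ := by exact_mod_cast (by omega : k + 1 ≤ ⌊min a b⌋)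
    have h2 : (⌊min a b⌋ : ℝ) ≤ min a b := Int.floor_le _
    exact hk (by rw [Fc_eq_one k a (by have := min_le_left a b; linarith),
      Fc_eq_one k b (by have := min_le_right a b; linarith)])
  · by_contra hc
    push_neg at hc
    have h1 : (⌈max a b⌉ : ℝ) + 1 ≤ (k:ℝ) := by exact_mod_cast (by omega : ⌈max a b⌉ + 1 ≤ k)
    have h2 : max a b ≤ (⌈max a b⌉ : ℝ) := Int.le_ceil _
    exact hk (by rw [Fc_eq_zero k a (by have := le_max_left a b; linarith),
      Fc_eq_zero k b (by have := le_max_right a b; linarith)])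

lemma keyF (a b : ℝ) (hab : a ≤ b) :
    ∃ k : ℤ, min (b - a) 1 / 2 ≤ Fc k b - Fc k a := by
  set d := min (b - a) 1 with hd
  have hd0 : 0 ≤ d := le_min (by linarith) (by norm_num)
  have hd1 : d ≤ 1 := min_le_right _ _
  have hcb : a + d ≤ b := by have := min_le_left (b - a) 1; simp only [← hd] at this; linarith
  set k0 : ℤ := ⌊a⌋ with hk0
  have hk0a : (k0:ℝ) ≤ a := Int.floor_le a
  have hak0 : a < (k0:ℝ) + 1 := Int.lt_floor_add_one a
  rcases le_or_gt (a + d) ((k0:ℝ) + 1) with hc | hc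
  · refine ⟨k0, ?_⟩
    have hFa : Fc k0 a = a - k0 := by
      rw [Fc, max_eq_right (by linarith), min_eq_right (by linarith)]
    have hFc : Fc k0 (a + d) = a + d - k0 := by
      rw [Fc, max_eq_right (by linarith), min_eq_right (by linarith)]
    have hm := Fc_mono k0 hcb
    rw [hFc] at hm
    rw [hFa]
    linarith
  · rcases le_or_gt (d/2) ((k0:ℝ) + 1 - a) with hp | hp
    · refine ⟨k0, ?_⟩
      have hFa : Fc k0 a = a - k0 := by
        rw [Fc, max_eq_right (by linarith), min_eq_right (by linarith)]
      have hFb : Fc k0 b = 1 := Fc_eq_one _ _ (by linarith)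
      rw [hFa, hFb]
      linarith
    · refine ⟨k0 + 1, ?_⟩
      have hFa : Fc (k0+1) a = 0 := Fc_eq_zero _ _ (by push_cast; linarith)
      have hFc : Fc (k0+1) (a + d) = a + d - ((k0:ℝ) + 1) := by
        rw [Fc, max_eq_right (by push_cast; linarith), min_eq_right (by push_cast; linarith)]
        push_cast
        ring
      have hm := Fc_mono (k0+1) hcb
      rw [hFc] at hm
      rw [hFa]
      linarith

/-- The integer datum used on the `i`-th block when encoding `x : ℝ^ℕ` as a subset of `ℕ`. -/
noncomputable def mval (x : ℕ → ℝ) (i : ℕ) : ℕ :=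
  ⌊Fc (e2.symm i).2 (x (e2.symm i).1) * 2^i⌋₊

lemma mval_le (x : ℕ → ℝ) (i : ℕ) : mval x i ≤ 2^i := by
  apply Nat.floor_le_of_le
  push_cast
  have h1 := Fc_le_one (e2.symm i).2 (x (e2.symm i).1)
  have h2 := Fc_nonneg (e2.symm i).2 (x (e2.symm i).1)
  nlinarith [pow_pos (show (0:ℝ) < 2 by norm_num) i]

/-- The reduction map from `ℝ^ℕ` to `2^ℕ`: on the `i`-th dyadic block we put the initial
segment of length `mval x i`. -/
noncomputable def gmap (x : ℕ → ℝ) (j : ℕ) : Bool :=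
  if j = 0 then false
  else decide (j - 2^(Nat.log 2 j) < mval x (Nat.log 2 j))

lemma gmap_card (x y : ℕ → ℝ) (i : ℕ) :
    ((Iblk i).filter (fun j => gmap x j ≠ gmap y j)).card
      = max (mval x i) (mval y i) - min (mval x i) (mval y i) := by
  have hg : ∀ z : ℕ → ℝ, ∀ j ∈ Iblk i, gmap z j = decide (j - 2^i < mval z i) := by
    intro z j hj
    simp only [Iblk, Finset.mem_Ico] at hj
    have h0 : j ≠ 0 := by have := Nat.one_le_two_pow (n := i); omega
    rw [gmap, if_neg h0, Nat.log_eq_of_pow_le_of_lt_pow hj.1 hj.2]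
  have hx := mval_le x i
  have hy := mval_le y i
  have hpow : (2:ℕ)^(i+1) = 2^i + 2^i := by ring
  have hfe : (Iblk i).filter (fun j => gmap x j ≠ gmap y j)
      = Finset.Ico (2^i + min (mval x i) (mval y i)) (2^i + max (mval x i) (mval y i)) := by
    ext j
    simp only [Finset.mem_filter, Finset.mem_Ico]
    constructor
    · rintro ⟨hj, hne⟩
      rw [hg x j hj, hg y j hj, ne_eq, decide_eq_decide] at hne
      simp only [Iblk, Finset.mem_Ico] at hj
      omega
    · rintro ⟨h1, h2⟩
      have hj : j ∈ Iblk i := by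
        simp only [Iblk, Finset.mem_Ico]
        omega
      refine ⟨hj, ?_⟩
      rw [hg x j hj, hg y j hj, ne_eq, decide_eq_decide]
      omega
  rw [hfe, Nat.card_Ico]
  omega

lemma gmap_measurable : Measurable gmap := by
  rw [measurable_pi_iff]
  intro j
  by_cases h : j = 0
  · simp only [gmap, if_pos h]
    exact measurable_const
  · simp only [gmap, if_neg h]
    have m1 : Measurable (fun x : ℕ → ℝ => mval x (Nat.log 2 j)) := by
      unfold mval
      exact Nat.measurable_floor.comp
        ((((Fc_continuous _).measurable).comp (measurable_pi_apply _)).mul_const _)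
    exact (measurable_of_countable
      (fun m : ℕ => decide (j - 2^(Nat.log 2 j) < m))).comp m1

lemma reduction2 (x y : ℕ → ℝ) :
    c0Equiv x y ↔ densityZeroEquiv (gmap x) (gmap y) := by
  rw [dze_iff_blocks]
  set G : ℕ → ℝ := fun i =>
    Fc (e2.symm i).2 (x (e2.symm i).1) - Fc (e2.symm i).2 (y (e2.symm i).1) with hG
  have hbound : ∀ i : ℕ,
      abs ((((Iblk i).filter (fun j => gmap x j ≠ gmap y j)).card : ℝ)/2^i - |G i|) ≤ 2/2^i := by
    intro i
    have hpow : (0:ℝ) < 2^i := by positivity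
    set a : ℝ := Fc (e2.symm i).2 (x (e2.symm i).1) * 2^i with ha
    set b : ℝ := Fc (e2.symm i).2 (y (e2.symm i).1) * 2^i with hb
    have ha0 : 0 ≤ a := mul_nonneg (Fc_nonneg _ _) hpow.le
    have hb0 : 0 ≤ b := mul_nonneg (Fc_nonneg _ _) hpow.le
    have hfa1 : ((mval x i : ℝ)) ≤ a := Nat.floor_le ha0
    have hfa2 : a < (mval x i : ℝ) + 1 := Nat.lt_floor_add_one a
    have hfb1 : ((mval y i : ℝ)) ≤ b := Nat.floor_le hb0
    have hfb2 : b < (mval y i : ℝ) + 1 := Nat.lt_floor_add_one b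
    have hcast : (((Iblk i).filter (fun j => gmap x j ≠ gmap y j)).card : ℝ)
        = |(mval x i : ℝ) - (mval y i : ℝ)| := by
      rw [gmap_card]
      rcases le_total (mval x i) (mval y i) with h | h
      · rw [max_eq_right h, min_eq_left h, Nat.cast_sub h, abs_sub_comm,
          abs_of_nonneg (sub_nonneg.2 (Nat.cast_le.2 h))]
      · rw [max_eq_left h, min_eq_right h, Nat.cast_sub h,
          abs_of_nonneg (sub_nonneg.2 (Nat.cast_le.2 h))]
    have hGi : |G i| = |a - b| / 2^i := by
      have heq : a - b = G i * 2^i := by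
        simp only [hG, ha, hb]
        ring
      rw [heq, abs_mul, abs_of_pos hpow]
      field_simp
    rw [hcast, hGi, div_sub_div_same, abs_div, abs_of_pos hpow]
    gcongr
    have h1 := abs_abs_sub_abs_le_abs_sub ((mval x i : ℝ) - mval y i) (a - b)
    have h2 : |((mval x i:ℝ) - mval y i) - (a - b)| ≤ 2 := by
      have e : ((mval x i:ℝ) - mval y i) - (a - b) = ((mval x i:ℝ) - a) + (b - mval y i) := by
        ring
      rw [e]
      refine le_trans (abs_add_le _ _) ?_
      have hA : |(mval x i:ℝ) - a| ≤ 1 := abs_le.2 ⟨by linarith, by linarith⟩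
      have hB : |b - (mval y i:ℝ)| ≤ 1 := abs_le.2 ⟨by linarith, by linarith⟩
      linarith
    linarith
  have h2pow : Tendsto (fun i : ℕ => (2:ℝ)/2^i) atTop (𝓝 0) := by
    have hbase := tendsto_pow_atTop_nhds_zero_of_lt_one
      (by norm_num : (0:ℝ) ≤ 1/2) (by norm_num : (1/2:ℝ) < 1)
    have h := hbase.const_mul 2
    simp only [mul_zero] at h
    have heq : ∀ i : ℕ, (2:ℝ)/2^i = 2 * (1/2)^i := by
      intro i; rw [div_pow, one_pow]; ring
    simp only [heq]
    exact h
  have hiff1 : Tendsto (fun i =>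
        (((Iblk i).filter (fun j => gmap x j ≠ gmap y j)).card : ℝ)/2^i) atTop (𝓝 0)
      ↔ Tendsto G atTop (𝓝 0) := by
    constructor
    · intro h
      rw [tendsto_zero_iff_norm_tendsto_zero]
      simp only [Real.norm_eq_abs]
      apply squeeze_zero (fun i => abs_nonneg _) (fun i => ?_)
        (by simpa using h.add h2pow)
      have h1 := abs_le.1 (hbound i)
      linarith [h1.1, h1.2]
    · intro h
      have habs : Tendsto (fun i => |G i|) atTop (𝓝 0) := by
        rw [tendsto_zero_iff_norm_tendsto_zero] at h
        simpa [Real.norm_eq_abs] using h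
      apply squeeze_zero (fun i => by positivity) (fun i => ?_)
        (by simpa using habs.add h2pow)
      have h1 := abs_le.1 (hbound i)
      linarith [h1.1, h1.2]
  have hiff2 : c0Equiv x y ↔ Tendsto G atTop (𝓝 0) := by
    constructor
    · intro hc
      rw [NormedAddCommGroup.tendsto_nhds_zero]
      intro ε hε
      rw [c0Equiv, Metric.tendsto_atTop] at hc
      obtain ⟨N, hN⟩ := hc ε hε
      have hS : {q : ℕ × ℤ | q.1 < N ∧ Fc q.2 (x q.1) ≠ Fc q.2 (y q.1)}.Finite := by
        apply Set.Finite.subset ((Set.finite_Iio N).biUnion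
          (fun n _ => ((Fc_ne_finite (x n) (y n)).image (fun k => ((n, k) : ℕ × ℤ)))))
        rintro ⟨n, k⟩ ⟨h1, h2⟩
        exact Set.mem_biUnion h1 ⟨k, h2, rfl⟩
      have hfin : {i : ℕ | ¬ ‖G i‖ < ε}.Finite := by
        apply Set.Finite.subset (hS.image e2)
        intro i hi
        simp only [Set.mem_setOf_eq] at hi
        have hne : Fc (e2.symm i).2 (x (e2.symm i).1) ≠ Fc (e2.symm i).2 (y (e2.symm i).1) := by
          intro hcon
          apply hi
          simp only [hG, Real.norm_eq_abs, hcon, sub_self, abs_zero]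
          exact hε
        have hlt : (e2.symm i).1 < N := by
          by_contra hcon
          push_neg at hcon
          have hd := hN _ hcon
          rw [Real.dist_eq, sub_zero] at hd
          apply hi
          simp only [hG, Real.norm_eq_abs]
          exact lt_of_le_of_lt (Fc_lipschitz _ _ _) hd
        exact ⟨e2.symm i, ⟨hlt, hne⟩, Equiv.apply_symm_apply _ _⟩
      rw [← Nat.cofinite_eq_atTop]
      exact hfin.eventually_cofinite_notMem.mono (fun i hi => by simpa using hi)
    · intro hGt
      have hex : ∀ n, ∃ k : ℤ, min |x n - y n| 1 / 2 ≤ |Fc k (x n) - Fc k (y n)| := by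
        intro n
        rcases le_total (x n) (y n) with h | h
        · obtain ⟨k, hk⟩ := keyF (x n) (y n) h
          refine ⟨k, ?_⟩
          have e1' : |x n - y n| = y n - x n := by
            rw [abs_sub_comm]; exact abs_of_nonneg (by linarith)
          rw [e1', abs_sub_comm]
          exact le_trans hk (le_abs_self _)
        · obtain ⟨k, hk⟩ := keyF (y n) (x n) h
          refine ⟨k, ?_⟩
          have e1' : |x n - y n| = x n - y n := abs_of_nonneg (by linarith)
          rw [e1']
          exact le_trans hk (le_abs_self _)
      choose kf hkf using hex
      have inj : Function.Injective (fun n => e2 (n, kf n)) := by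
        intro a b hab
        exact congrArg Prod.fst (e2.injective hab)
      have hni : Tendsto (fun n => e2 (n, kf n)) atTop atTop := by
        rw [← Nat.cofinite_eq_atTop]
        exact inj.tendsto_cofinite
      have h2 := hGt.comp hni
      have hGn : ∀ n, G (e2 (n, kf n)) = Fc (kf n) (x n) - Fc (kf n) (y n) := by
        intro n
        simp only [hG, Equiv.symm_apply_apply]
      have habs : Tendsto (fun n => |Fc (kf n) (x n) - Fc (kf n) (y n)|) atTop (𝓝 0) := by
        have h3 := tendsto_zero_iff_norm_tendsto_zero.mp h2
        simpa [Function.comp_def, hGn, Real.norm_eq_abs] using h3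
      have hmin : Tendsto (fun n => min |x n - y n| 1) atTop (𝓝 0) := by
        apply squeeze_zero (fun n => le_min (abs_nonneg _) (by norm_num)) (fun n => ?_)
          (by simpa using habs.const_mul 2)
        have := hkf n
        linarith
      rw [c0Equiv, tendsto_zero_iff_norm_tendsto_zero]
      apply Tendsto.congr' ?_ hmin
      have hev : ∀ᶠ n in atTop, min |x n - y n| 1 < 1 :=
        hmin.eventually_lt_const (by norm_num)
      filter_upwards [hev] with n hn
      have hlt1 : |x n - y n| < 1 := by
        by_contra hcon
        push_neg at hcon
        rw [min_eq_right hcon] at hn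
        exact lt_irrefl _ hn
      rw [Real.norm_eq_abs]
      exact min_eq_left hlt1.le
  rw [hiff2, ← hiff1]

/-- Oliver: the equivalence relation `E_{𝒵₀}` induced by the density ideal `𝒵₀` is Borel
bireducible with the equivalence relation `E_{c₀}` induced by the Banach space `c₀`. -/
theorem densityZeroEquiv_borel_bireducible_c0Equiv :
    BorelReducible densityZeroEquiv c0Equiv ∧ BorelReducible c0Equiv densityZeroEquiv := by
  exact ⟨⟨fmap, fmap_measurable, reduction1⟩, ⟨gmap, gmap_measurable, reduction2⟩⟩
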